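/- Let K be a field and a, b, c, d ∈ K with a + b ≠ 0. Put a' = a + b, b' = b·c/(a + b), c' = a·c/(a + b). Assume 1 − d ≠ 0, 1 − c/(1 − d) ≠ 0, 1 − c' − d ≠ 0 and 1 − b'/(1 − c' − d) ≠ 0. Then a + b/(1 − c/(1 − d)) = a'/(1 − b'/(1 − c' − d)). -/

import Mathlib

/-- Commutative continued-fraction rearrangement lemma (Lemma 2.9, `rear2lem`). -/
theorem stmt1 {K : Type*} [Field K] (a b c d : K)
    (hab : a + b ≠ 0)
    (hd : 1 - d ≠ 0)
    (h1 : 1 - c / (1 - d) ≠ 0)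
    (h2 : 1 - (a * c / (a + b)) - d ≠ 0)
    (h3 : 1 - (b * c / (a + b)) / (1 - (a * c / (a + b)) - d) ≠ 0) :
    a + b / (1 - c / (1 - d)) =
      (a + b) / (1 - (b * c / (a + b)) / (1 - (a * c / (a + b)) - d)) := by
  have e1 : 1 - d - c = (1 - c / (1 - d)) * (1 - d) := by field_simp
  have h1' : 1 - d - c ≠ 0 := e1 ▸ mul_ne_zero h1 hd
  have e2 : a + b - a * c - (a + b) * d = (1 - a * c / (a + b) - d) * (a + b) := by
    field_simp
  have h2' : a + b - a * c - (a + b) * d ≠ 0 := e2 ▸ mul_ne_zero h2 hab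
  have e3 : a + b - a * c - (a + b) * d - b * c =
      (1 - b * c / (a + b) / (1 - a * c / (a + b) - d)) *
        (a + b - a * c - (a + b) * d) := by
    field_simp [h2]
  have h3' : a + b - a * c - (a + b) * d - b * c ≠ 0 := e3 ▸ mul_ne_zero h3 h2'
  rw [eq_div_of_mul_eq hd e1.symm, eq_div_of_mul_eq h2' e3.symm]
  rw [div_div_eq_mul_div, div_div_eq_mul_div, add_div' _ _ _ h1', div_eq_div_iff h1' h3']
  ring
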